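/- arXiv:1404.0151 — 5 statements merged into one kernel-verified Lean document; each statement's English description precedes it below -/
import Mathlib

section
/- Let G be a digraph, b a vertex, and I a set of vertices not containing b. If there is a family of pairwise edge-disjoint directed paths or rays (Q_v | v ∈ I), where Q_v starts at v and either ends at b or dominates b (a ray dominates b if there are infinitely many pairwise edge-disjoint directed paths from it to b; a path dominates b if its last vertex has infinitely many directed paths to b that are edge-disjoint except at that vertex), then every finite subset S of I can be linked to b by |S| pairwise edge-disjoint directed paths, each starting at a distinct vertex of S and ending at b. -/
/-- A (finite) directed path in the digraph with adjacency `Adj`: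
a nonempty list of distinct vertices whose consecutive pairs are edges. -/
structure DiPath {V : Type*} (Adj : V → V → Prop) : Type _ where
  verts : List V
  ne : verts ≠ []
  chain : verts.Chain' Adj
  nodup : verts.Nodup

namespace DiPath
variable {V : Type*} {Adj : V → V → Prop}
/-- The first vertex of a directed path. -/
def first (P : DiPath Adj) : V := P.verts.head P.ne
/-- The last vertex of a directed path. -/
def last (P : DiPath Adj) : V := P.verts.getLast P.ne
/-- The (directed) edges of a path, as ordered pairs of consecutive vertices. -/
def edges (P : DiPath Adj) : List (V × V) := P.verts.zip P.verts.tail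
/-- The edge set of a path. -/
def edgeSet (P : DiPath Adj) : Set (V × V) := {e | e ∈ P.edges}
/-- The vertex set of a path. -/
def vertexSet (P : DiPath Adj) : Set V := {v | v ∈ P.verts}
end DiPath

/-- A directed ray: a one-way infinite directed path. -/
structure DiRay {V : Type*} (Adj : V → V → Prop) : Type _ where
  f : ℕ → V
  inj : Function.Injective f
  adj : ∀ n, Adj (f n) (f (n + 1))

namespace DiRay
variable {V : Type*} {Adj : V → V → Prop}
/-- The first vertex of a ray. -/
def first (R : DiRay Adj) : V := R.f 0
/-- The edge set of a ray. -/
def edgeSet (R : DiRay Adj) : Set (V × V) := Set.range fun n => (R.f n, R.f (n + 1))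
/-- The vertex set of a ray. -/
def vertexSet (R : DiRay Adj) : Set V := Set.range R.f
end DiRay

/-- A path or a ray. -/
inductive PR {V : Type*} (Adj : V → V → Prop) : Type _
  | path : DiPath Adj → PR Adj
  | ray : DiRay Adj → PR Adj

namespace PR
variable {V : Type*} {Adj : V → V → Prop}
/-- The first vertex. -/
def first : PR Adj → V
  | .path P => P.first
  | .ray R => R.first
/-- The edge set. -/
def edgeSet : PR Adj → Set (V × V)
  | .path P => P.edgeSet
  | .ray R => R.edgeSet
/-- The vertex set. -/
def vertexSet : PR Adj → Set V
  | .path P => P.vertexSet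
  | .ray R => R.vertexSet
end PR

/-- A vertex `v` dominates `b` (edge version): there are infinitely many
pairwise edge-disjoint directed `v`–`b` paths. -/
def VDom {V : Type*} (Adj : V → V → Prop) (b v : V) : Prop :=
  ∃ P : ℕ → DiPath Adj, Function.Injective P ∧ (∀ n, (P n).first = v) ∧
    (∀ n, (P n).last = b) ∧ ∀ m n, m ≠ n → Disjoint (P m).edgeSet (P n).edgeSet

/-- A ray `R` dominates `b` (edge version): there are infinitely many pairwise
edge-disjoint directed paths from `R` to `b`. -/
def RDom {V : Type*} (Adj : V → V → Prop) (b : V) (R : DiRay Adj) : Prop :=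
  ∃ P : ℕ → DiPath Adj, Function.Injective P ∧ (∀ n, (P n).first ∈ R.vertexSet) ∧
    (∀ n, (P n).last = b) ∧ ∀ m n, m ≠ n → Disjoint (P m).edgeSet (P n).edgeSet

/-- A path or ray is good for `b` if it ends at `b` or dominates `b`
(a path dominates `b` if its last vertex does; a ray dominates as a ray). -/
def PR.Good {V : Type*} {Adj : V → V → Prop} (b : V) : PR Adj → Prop
  | .path P => P.last = b ∨ VDom Adj b P.last
  | .ray R => RDom Adj b R

/-- A domination linkage (edge version) from `I` to `b`: pairwise edge-disjoint
paths or rays, one starting at each vertex of `I`, each ending at `b` or dominating `b`. -/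
def DomLinkage {V : Type*} (Adj : V → V → Prop) (b : V) (I : Set V) : Prop :=
  ∃ Q : I → PR Adj, (∀ v : I, (Q v).first = (v : V)) ∧ (∀ v, (Q v).Good b) ∧
    ∀ v w : I, v ≠ w → Disjoint (Q v).edgeSet (Q w).edgeSet

/-- The finite set `S` can be linked to `b` by pairwise edge-disjoint directed paths,
one starting at each vertex of `S`, each ending at `b`. -/
def FinLinked {V : Type*} (Adj : V → V → Prop) (b : V) (S : Finset V) : Prop :=
  ∃ P : S → DiPath Adj, (∀ s, (P s).first = (s : V)) ∧ (∀ s, (P s).last = b) ∧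
    ∀ s t, s ≠ t → Disjoint (P s).edgeSet (P t).edgeSet



section ListLemmas
variable {V : Type*}

/-- steps of a list -/
def steps (L : List V) : List (V × V) := L.zip L.tail

@[simp] lemma steps_nil : steps ([] : List V) = [] := rfl
@[simp] lemma steps_single (a : V) : steps [a] = [] := rfl
@[simp] lemma steps_cons2 (a c : V) (l : List V) :
    steps (a :: c :: l) = (a, c) :: steps (c :: l) := rfl

lemma chain'_of_steps {R : V → V → Prop} {L : List V} (h : L.Chain' R) :
    ∀ e ∈ steps L, R e.1 e.2 := by
  induction L with
  | nil => simp
  | cons a l ih =>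
    cases l with
    | nil => simp
    | cons c m =>
      simp only [List.Chain', List.isChain_cons_cons] at h
      intro e he
      rw [steps_cons2, List.mem_cons] at he
      rcases he with rfl | he
      · exact h.1
      · exact ih h.2 e he

lemma steps_map_fst (L : List V) : (steps L).map Prod.fst = L.dropLast := by
  induction L with
  | nil => rfl
  | cons a l ih =>
    cases l with
    | nil => rfl
    | cons c m => simp only [steps_cons2, List.map_cons, ih, List.dropLast_cons₂]

lemma steps_map_snd (L : List V) : (steps L).map Prod.snd = L.tail := by
  induction L with
  | nil => rfl
  | cons a l ih =>
    cases l with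
    | nil => rfl
    | cons c m =>
      simp only [steps_cons2, List.map_cons, List.tail_cons]
      rw [ih]; rfl

lemma steps_nodup {L : List V} (h : L.Nodup) : (steps L).Nodup := by
  apply List.Nodup.of_map Prod.fst
  rw [steps_map_fst]
  exact h.sublist (List.dropLast_sublist L)

lemma steps_subset_cons (x : V) (L : List V) : ∀ e ∈ steps L, e ∈ steps (x :: L) := by
  cases L with
  | nil => simp
  | cons c m => intro e he; rw [steps_cons2]; exact List.mem_cons_of_mem _ he

lemma steps_subset_append (K M : List V) : ∀ e ∈ steps M, e ∈ steps (K ++ M) := by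
  induction K with
  | nil => simp
  | cons k K' ih =>
    intro e he
    exact steps_subset_cons _ _ _ (ih e he)

/-- countP identities for head/tail/dropLast -/
lemma countP_dropLast {L : List V} (h : L ≠ []) (p : V → Bool) :
    L.countP p = L.dropLast.countP p + (if p (L.getLast h) then 1 else 0) := by
  conv_lhs => rw [← List.dropLast_append_getLast h]
  rw [List.countP_append]
  simp [List.countP_cons]

lemma countP_tail {L : List V} (h : L ≠ []) (p : V → Bool) :
    L.countP p = (if p (L.head h) then 1 else 0) + L.tail.countP p := by
  conv_lhs => rw [← List.cons_head_tail h]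
  rw [List.countP_cons]
  omega

/-- The fundamental divergence identity for the steps of a list. -/
lemma steps_countP_fst_sub_snd {L : List V} (h : L ≠ []) (p : V → Bool) :
    ((steps L).countP (fun e => p e.1) : ℤ) - (steps L).countP (fun e => p e.2)
      = (if p (L.head h) then 1 else 0) - (if p (L.getLast h) then 1 else 0) := by
  have h1 : (steps L).countP (fun e => p e.1) = L.dropLast.countP p := by
    rw [← steps_map_fst L, List.countP_map]; rfl
  have h2 : (steps L).countP (fun e => p e.2) = L.tail.countP p := by
    rw [← steps_map_snd L, List.countP_map]; rfl
  have h3 := countP_dropLast h p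
  have h4 := countP_tail h p
  rw [h1, h2]
  split_ifs at h3 h4 ⊢ <;> omega

/-- crossing lemma -/
lemma exists_crossing (Z : Set V) : ∀ (L : List V) (h : L ≠ []),
    L.head h ∈ Z → L.getLast h ∉ Z → ∃ e ∈ steps L, e.1 ∈ Z ∧ e.2 ∉ Z := by
  intro L
  induction L with
  | nil => simp
  | cons a l ih =>
    intro h ha hl
    cases l with
    | nil => simp at ha hl; exact absurd ha hl
    | cons c m =>
      by_cases hc : c ∈ Z
      · obtain ⟨e, he, h1, h2⟩ := ih (by simp) (by simpa using hc)
          (by simpa [List.getLast_cons] using hl)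
        exact ⟨e, steps_subset_cons _ _ _ he, h1, h2⟩
      · exact ⟨(a, c), by simp, by simpa using ha, hc⟩

lemma getLast_append_ne {M : List V} (K : List V) (hM : M ≠ []) (h : K ++ M ≠ []) :
    (K ++ M).getLast h = M.getLast hM := by
  rw [List.getLast_append]
  simp [hM]

lemma walk_to_path {R : V → V → Prop} : ∀ (n : ℕ) (L : List V), L.length ≤ n → ∀ (h : L ≠ []),
    L.Chain' R → ∃ (M : List V) (hM : M ≠ []), M.Chain' R ∧ M.Nodup ∧
      M.head hM = L.head h ∧ M.getLast hM = L.getLast h ∧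
      (∀ e ∈ steps M, e ∈ steps L) ∧ (∀ v ∈ M, v ∈ L) := by
  intro n
  induction n with
  | zero => intro L hL h; interval_cases hl : L.length <;> simp_all
  | succ n ih =>
    intro L hL h hch
    match L, h with
    | a :: rest, _ =>
      by_cases hmem : a ∈ rest
      · obtain ⟨r₁, r₂, rfl⟩ := List.append_of_mem hmem
        have heq : a :: (r₁ ++ a :: r₂) = (a :: r₁) ++ (a :: r₂) := by simp
        have hsuff : (a :: r₂) <:+ (a :: (r₁ ++ a :: r₂)) := ⟨a :: r₁, by simp⟩
        have hch2 : (a :: r₂).Chain' R := hch.suffix hsuff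
        have hlen : (a :: r₂).length ≤ n := by
          simp only [List.length_cons, List.length_append] at hL ⊢; omega
        obtain ⟨M, hM, c1, c2, c3, c4, c5, c6⟩ := ih (a :: r₂) hlen (by simp) hch2
        refine ⟨M, hM, c1, c2, by rw [c3]; rfl, ?_, ?_, ?_⟩
        · rw [c4, List.getLast_congr _ _ heq, getLast_append_ne (a :: r₁) (by simp)]
          simp
        · intro e he
          have h3 := steps_subset_append (a :: r₁) (a :: r₂) e (c5 e he)
          rw [heq]
          exact h3
        · intro v hv
          rcases List.mem_cons.mp (c6 v hv) with rfl | hv2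
          · simp
          · simp [hv2]
      · cases rest with
        | nil => exact ⟨[a], by simp, List.isChain_singleton _, by simp, rfl, rfl, by simp [steps], by simp⟩
        | cons c m =>
          have hlen : (c :: m).length ≤ n := by simp at hL ⊢; omega
          obtain ⟨M, hM, c1, c2, c3, c4, c5, c6⟩ := ih (c :: m) hlen (by simp) hch.tail
          refine ⟨a :: M, by simp, ?_, ?_, rfl, ?_, ?_, ?_⟩
          · simp only [List.Chain', List.isChain_cons]
            refine ⟨?_, c1⟩
            intro y hy
            rw [List.head?_eq_head hM] at hy
            obtain rfl : y = M.head hM := by simpa using hy.symm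
            rw [c3]
            simp only [List.head_cons]
            exact (List.isChain_cons_cons.mp hch).1
          · rw [List.nodup_cons]
            exact ⟨fun hc => hmem (c6 a hc), c2⟩
          · have hgl : (a :: M).getLast (by simp) = M.getLast hM := List.getLast_cons hM
            rw [hgl, c4]
            exact (List.getLast_cons (by simp)).symm
          · intro e he
            match M, hM with
            | d :: M', _ =>
              rw [steps_cons2, List.mem_cons] at he
              rcases he with rfl | he
              · have : d = c := by simpa using c3
                subst this
                simp
              · exact steps_subset_cons _ _ _ (c5 e he)
          · intro v hv
            rcases List.mem_cons.mp hv with rfl | hv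
            · simp
            · exact List.mem_cons_of_mem _ (c6 v hv)

lemma walk_append {R : V → V → Prop} {A B : List V} (hA : A ≠ []) (hB : B ≠ [])
    (hcA : A.Chain' R) (hcB : B.Chain' R) (hlink : A.getLast hA = B.head hB) :
    ∃ (C : List V) (hC : C ≠ []), C.Chain' R ∧ C.head hC = A.head hA ∧
      C.getLast hC = B.getLast hB ∧ ∀ e ∈ steps C, e ∈ steps A ∨ e ∈ steps B := by
  refine ⟨A ++ B.tail, by simp [hA], ?_, by rw [List.head_append_of_ne_nil], ?_, ?_⟩
  · simp only [List.Chain', List.isChain_append]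
    refine ⟨hcA, hcB.tail, ?_⟩
    intro x hx y hy
    rw [List.getLast?_eq_getLast hA] at hx
    obtain rfl : x = A.getLast hA := by simpa using hx.symm
    rw [hlink]
    have h2 : B.Chain' R := hcB
    conv at h2 => rw [← List.cons_head_tail hB]
    simp only [List.Chain', List.isChain_cons] at h2
    exact h2.1 y hy
  · match B, hB with
    | b0 :: bt, _ =>
      simp only [List.tail_cons]
      cases bt with
      | nil => simp only [List.append_nil]; rw [hlink]; simp
      | cons b1 bt' => rw [getLast_append_ne A (by simp)]; simp [List.getLast_cons]
  · match B, hB with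
    | b0 :: bt, _ =>
      simp only [List.tail_cons]
      clear hcA hcB
      induction A with
      | nil => simp at hA
      | cons a A' ih =>
        cases A' with
        | nil =>
          simp only [List.getLast_singleton] at hlink
          subst hlink
          intro e he
          cases bt with
          | nil => simp only [List.append_nil] at he; exact Or.inl he
          | cons b1 bt' =>
            right
            simp only [List.singleton_append] at he
            exact he
        | cons a1 A'' =>
          intro e he
          have hlink' : (a1 :: A'').getLast (by simp) = b0 := by
            rw [List.getLast_cons (by simp)] at hlink
            simpa using hlink
          rcases List.mem_cons.mp (by simpa using he) with rfl | he'
          · left; simp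
          · rcases ih (by simp) hlink' e he' with h | h
            · left; exact steps_subset_cons _ _ _ h
            · right; exact h

lemma reflTransGen_walk {R : V → V → Prop} {a b : V} (h : Relation.ReflTransGen R a b) :
    ∃ (L : List V) (hL : L ≠ []), L.Chain' R ∧ L.head hL = a ∧ L.getLast hL = b := by
  induction h with
  | refl => exact ⟨[a], by simp, List.isChain_singleton _, rfl, rfl⟩
  | @tail x y hax hxy ih =>
    obtain ⟨L, hL, hch, hh, hl⟩ := ih
    refine ⟨L ++ [y], by simp, ?_, by rwa [List.head_append_of_ne_nil],
      by rw [getLast_append_ne L (by simp)]; simp⟩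
    simp only [List.Chain', List.isChain_append]
    refine ⟨hch, by simp, ?_⟩
    intro u hu v hv
    rw [List.getLast?_eq_getLast hL] at hu
    simp only [Option.mem_def, Option.some.injEq, List.head?_cons] at hu hv
    rw [← hu, ← hv, hl]
    exact hxy

lemma chain'_of_forall_steps {R : V → V → Prop} {L : List V}
    (h : ∀ e ∈ steps L, R e.1 e.2) : L.Chain' R := by
  induction L with
  | nil => exact List.isChain_nil
  | cons a l ih =>
    cases l with
    | nil => exact List.isChain_singleton _
    | cons c m =>
      simp only [List.Chain', List.isChain_cons_cons]
      exact ⟨h (a, c) (by simp), ih (fun e he => h e (steps_subset_cons _ _ _ he))⟩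

end ListLemmas
section Flow
variable {V : Type*} [DecidableEq V] (Adj : V → V → Prop) (b : V)

/-- divergence of a finite edge set at a vertex -/
def fdiv (f : Finset (V × V)) (x : V) : ℤ :=
  ((f.filter (fun e => e.1 = x)).card : ℤ) - ((f.filter (fun e => e.2 = x)).card : ℤ)

def IsFlow (f : Finset (V × V)) (T : Finset V) : Prop :=
  (∀ e ∈ f, Adj e.1 e.2) ∧ ∀ x, x ≠ b → fdiv f x = if x ∈ T then 1 else 0

variable {Adj b}

lemma card_filter_erase {α : Type*} [DecidableEq α] (f : Finset α) (e : α) (he : e ∈ f)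
    (p : α → Prop) [DecidablePred p] :
    ((f.erase e).filter p).card + (if p e then 1 else 0) = (f.filter p).card := by
  rw [Finset.filter_erase]
  by_cases hpe : p e
  · rw [if_pos hpe, Finset.card_erase_of_mem (Finset.mem_filter.2 ⟨he, hpe⟩)]
    have : 0 < (f.filter p).card := Finset.card_pos.2 ⟨e, Finset.mem_filter.2 ⟨he, hpe⟩⟩
    omega
  · rw [if_neg hpe, Finset.erase_eq_of_notMem (fun h => hpe (Finset.mem_filter.1 h).2)]
    simp

lemma fdiv_erase (f : Finset (V × V)) (e : V × V) (he : e ∈ f) (x : V) :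
    fdiv (f.erase e) x = fdiv f x - (if e.1 = x then 1 else 0) + (if e.2 = x then 1 else 0) := by
  have h1 := card_filter_erase f e he (fun e => e.1 = x)
  have h2 := card_filter_erase f e he (fun e => e.2 = x)
  simp only [fdiv]
  split_ifs at h1 h2 ⊢ <;> push_cast <;> omega

/-- extract a trail from t to b out of an edge set with nonneg divergence -/
lemma exists_trail : ∀ (n : ℕ) (f : Finset (V × V)), f.card ≤ n →
    (∀ x, x ≠ b → 0 ≤ fdiv f x) → ∀ t, t ≠ b → 1 ≤ fdiv f t →
    ∃ (L : List V) (hL : L ≠ []), L.head hL = t ∧ L.getLast hL = b ∧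
      (steps L).Nodup ∧ (∀ e ∈ steps L, e ∈ f) := by
  intro n
  induction n with
  | zero =>
    intro f hf _ t ht hdivt
    have : f = ∅ := Finset.card_eq_zero.1 (Nat.le_zero.1 hf)
    subst this
    simp [fdiv] at hdivt
  | succ n ih =>
    intro f hf hnn t ht hdivt
    -- find an edge out of t
    have hout : 0 < (f.filter (fun e => e.1 = t)).card := by
      by_contra hc
      push_neg at hc
      have : (f.filter (fun e => e.1 = t)).card = 0 := by omega
      simp only [fdiv, this] at hdivt
      have : (0 : ℤ) ≤ ((f.filter (fun e => e.2 = t)).card : ℤ) := by positivity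
      omega
    have hex : ∃ y, (t, y) ∈ f := by
      obtain ⟨e, he⟩ := Finset.card_pos.1 hout
      rw [Finset.mem_filter] at he
      exact ⟨e.2, by rw [← he.2, Prod.mk.eta]; exact he.1⟩
    obtain ⟨y, hef⟩ := hex
    by_cases hyb : y = b
    · refine ⟨[t, y], by simp, rfl, by simp [hyb], by simp [steps], ?_⟩
      intro e he
      simp only [steps, List.zip_cons_cons, List.tail_cons, List.zip_nil_right,
        List.mem_singleton] at he
      subst he
      exact hef
    · -- recurse on f.erase (t, y)
      have hcard : (f.erase (t, y)).card ≤ n := by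
        rw [Finset.card_erase_of_mem hef]
        have : 0 < f.card := Finset.card_pos.2 ⟨_, hef⟩
        omega
      have hdiv₁ : ∀ x, fdiv (f.erase (t, y)) x = fdiv f x - (if t = x then 1 else 0)
          + (if y = x then 1 else 0) := fun x => fdiv_erase f (t, y) hef x
      have hnn₁ : ∀ x, x ≠ b → 0 ≤ fdiv (f.erase (t, y)) x := by
        intro x hx
        rw [hdiv₁ x]
        rcases eq_or_ne t x with rfl | h1
        · have := hdivt
          split_ifs <;> omega
        · have := hnn x hx
          rw [if_neg h1]
          split_ifs <;> omega
      have hdivy : 1 ≤ fdiv (f.erase (t, y)) y := by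
        rw [hdiv₁ y]
        rcases eq_or_ne t y with rfl | hty
        · simpa using hdivt
        · have h0 := hnn y hyb
          rw [if_neg hty, if_pos rfl]
          omega
      obtain ⟨L, hL, hh, hl, hnd, hsub⟩ := ih (f.erase (t, y)) hcard hnn₁ y hyb hdivy
      refine ⟨t :: L, by simp, by simp, ?_, ?_, ?_⟩
      · rw [List.getLast_cons hL]; exact hl
      · match L, hL with
        | c :: m, _ =>
          rw [steps_cons2, List.nodup_cons]
          constructor
          · intro hmem
            have hm := hsub _ hmem
            have hc : c = y := by simpa using hh
            subst hc
            exact (Finset.notMem_erase _ _) hm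
          · exact hnd
      · intro e he
        match L, hL with
        | c :: m, _ =>
          rw [steps_cons2, List.mem_cons] at he
          rcases he with rfl | he
          · have hc : c = y := by simpa using hh
            rw [hc]
            exact hef
          · exact Finset.erase_subset _ _ (hsub e he)

end Flow
section Flow2
variable {V : Type*} [DecidableEq V] {Adj : V → V → Prop} {b : V}

lemma toFinset_filter_card {α : Type*} [DecidableEq α] {l : List α} (h : l.Nodup)
    (p : α → Prop) [DecidablePred p] :
    (l.toFinset.filter p).card = l.countP (fun a => decide (p a)) := by
  have heq : l.toFinset.filter p = (l.filter (fun a => decide (p a))).toFinset := by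
    ext a
    simp [List.mem_filter]
  rw [heq, List.toFinset_card_of_nodup (h.filter _), List.countP_eq_length_filter]

lemma card_filter_sdiff {α : Type*} [DecidableEq α] (f E : Finset α) (hE : E ⊆ f)
    (p : α → Prop) [DecidablePred p] :
    ((f \ E).filter p).card + (E.filter p).card = (f.filter p).card := by
  conv_rhs => rw [← Finset.sdiff_union_of_subset hE]
  rw [Finset.filter_union, Finset.card_union_of_disjoint
    (Finset.disjoint_filter_filter Finset.sdiff_disjoint)]

lemma card_filter_union_disj {α : Type*} [DecidableEq α] (f A : Finset α) (hA : Disjoint f A)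
    (p : α → Prop) [DecidablePred p] :
    ((f ∪ A).filter p).card = (f.filter p).card + (A.filter p).card := by
  rw [Finset.filter_union, Finset.card_union_of_disjoint (Finset.disjoint_filter_filter hA)]

lemma isFlow_sdiff {f : Finset (V × V)} {T : Finset V} (hf : IsFlow Adj b f T)
    {t : V} (ht : t ∈ T) (htb : t ≠ b) {L : List V} (hL : L ≠ [])
    (hh : L.head hL = t) (hlast : L.getLast hL = b)
    (hnd : (steps L).Nodup) (hsub : ∀ e ∈ steps L, e ∈ f) :
    IsFlow Adj b (f \ (steps L).toFinset) (T.erase t) := by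
  constructor
  · intro e he
    exact hf.1 e (Finset.mem_sdiff.1 he).1
  · intro x hx
    have hE : (steps L).toFinset ⊆ f := fun e he => hsub e (List.mem_toFinset.1 he)
    have h1 := card_filter_sdiff f _ hE (fun e => e.1 = x)
    have h2 := card_filter_sdiff f _ hE (fun e => e.2 = x)
    have e1 : (((steps L).toFinset).filter (fun e => e.1 = x)).card
        = (steps L).countP (fun e => decide (e.1 = x)) := toFinset_filter_card hnd _
    have e2 : (((steps L).toFinset).filter (fun e => e.2 = x)).card
        = (steps L).countP (fun e => decide (e.2 = x)) := toFinset_filter_card hnd _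
    have e3 := steps_countP_fst_sub_snd hL (fun v => decide (v = x))
    rw [hh, hlast] at e3
    simp only [decide_eq_true_eq] at e3
    have hfd := hf.2 x hx
    unfold fdiv at hfd ⊢
    rw [e1] at h1
    rw [e2] at h2
    by_cases hxt : x = t
    · subst hxt
      rw [if_pos ht] at hfd
      rw [if_neg (fun h => (Finset.mem_erase.1 h).1 rfl)]
      rw [if_pos rfl, if_neg (fun h : b = x => hx h.symm)] at e3
      omega
    · rw [if_neg (fun h : t = x => hxt h.symm), if_neg (fun h : b = x => hx h.symm)] at e3
      by_cases hxT : x ∈ T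
      · rw [if_pos hxT] at hfd
        rw [if_pos (Finset.mem_erase.2 ⟨hxt, hxT⟩)]
        omega
      · rw [if_neg hxT] at hfd
        rw [if_neg (fun h => hxT (Finset.mem_of_mem_erase h))]
        omega

lemma flow_decomp : ∀ (n : ℕ) (T : Finset V), T.card ≤ n → b ∉ T →
    ∀ f : Finset (V × V), IsFlow Adj b f T →
    ∃ P : {x // x ∈ T} → DiPath Adj, (∀ t, (P t).first = (t : V)) ∧ (∀ t, (P t).last = b) ∧
      (∀ s t, s ≠ t → Disjoint (P s).edgeSet (P t).edgeSet) ∧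
      (∀ t, (P t).edgeSet ⊆ (f : Set (V × V))) := by
  intro n
  induction n with
  | zero =>
    intro T hT hbT f hf
    have : T = ∅ := Finset.card_eq_zero.1 (Nat.le_zero.1 hT)
    subst this
    exact ⟨fun t => absurd t.2 (Finset.notMem_empty t.1),
      fun t => absurd t.2 (Finset.notMem_empty t.1),
      fun t => absurd t.2 (Finset.notMem_empty t.1),
      fun s t _ => absurd s.2 (Finset.notMem_empty s.1),
      fun t => absurd t.2 (Finset.notMem_empty t.1)⟩
  | succ n ih =>
    intro T hT hbT f hf
    rcases Finset.eq_empty_or_nonempty T with rfl | ⟨t, ht⟩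
    · exact ⟨fun t => absurd t.2 (Finset.notMem_empty t.1),
        fun t => absurd t.2 (Finset.notMem_empty t.1),
        fun t => absurd t.2 (Finset.notMem_empty t.1),
        fun s t _ => absurd s.2 (Finset.notMem_empty s.1),
        fun t => absurd t.2 (Finset.notMem_empty t.1)⟩
    · have htb : t ≠ b := fun h => hbT (h ▸ ht)
      have hnn : ∀ x, x ≠ b → 0 ≤ fdiv f x := by
        intro x hx
        rw [hf.2 x hx]
        split_ifs <;> omega
      have hdt : 1 ≤ fdiv f t := by rw [hf.2 t htb, if_pos ht]
      obtain ⟨L, hL, hh, hlast, hnd, hsub⟩ := exists_trail f.card f le_rfl hnn t htb hdt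
      -- L is a trail in f; convert to a nodup Adj-path
      have hchF : L.Chain' (fun a c => (a, c) ∈ f) := chain'_of_forall_steps hsub
      have hchA : L.Chain' Adj := hchF.imp (fun a c h => hf.1 (a, c) h)
      obtain ⟨M, hM, m1, m2, m3, m4, m5, _⟩ := walk_to_path L.length L le_rfl hL hchA
      set Pt : DiPath Adj := ⟨M, hM, m1, m2⟩ with hPt
      have hf' := isFlow_sdiff hf ht htb hL hh hlast hnd hsub
      have hcard : (T.erase t).card ≤ n := by
        rw [Finset.card_erase_of_mem ht]
        have : 0 < T.card := Finset.card_pos.2 ⟨t, ht⟩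
        omega
      obtain ⟨P', q1, q2, q3, q4⟩ := ih (T.erase t) hcard
        (fun h => hbT (Finset.mem_of_mem_erase h)) _ hf'
      have hPtedge : ∀ e ∈ Pt.edges, e ∈ (steps L).toFinset := by
        intro e he
        exact List.mem_toFinset.2 (m5 e he)
      refine ⟨fun s => if h : s.1 = t then Pt else P' ⟨s.1, Finset.mem_erase.2 ⟨h, s.2⟩⟩,
        ?_, ?_, ?_, ?_⟩
      · intro s
        dsimp only
        by_cases h : s.1 = t
        · rw [dif_pos h, DiPath.first, hPt]
          rw [m3, hh, h]
        · rw [dif_neg h]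
          exact q1 _
      · intro s
        dsimp only
        by_cases h : s.1 = t
        · rw [dif_pos h, DiPath.last, hPt]
          rw [m4, hlast]
        · rw [dif_neg h]
          exact q2 _
      · intro s u hsu
        dsimp only
        by_cases h1 : s.1 = t <;> by_cases h2 : u.1 = t
        · exact absurd (Subtype.ext (h1.trans h2.symm)) hsu
        · rw [dif_pos h1, dif_neg h2]
          rw [Set.disjoint_left]
          intro e he1 he2
          have hef' := q4 _ he2
          rw [Finset.coe_sdiff, Set.mem_diff] at hef'
          exact hef'.2 (hPtedge e he1)
        · rw [dif_neg h1, dif_pos h2]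
          rw [Set.disjoint_right]
          intro e he2 he1
          have hef' := q4 _ he1
          rw [Finset.coe_sdiff, Set.mem_diff] at hef'
          exact hef'.2 (hPtedge e he2)
        · rw [dif_neg h1, dif_neg h2]
          refine q3 _ _ (fun h => hsu ?_)
          have := congrArg Subtype.val h
          simp only at this
          exact Subtype.ext this
      · intro s e he
        dsimp only at he
        by_cases h : s.1 = t
        · rw [dif_pos h] at he
          exact hsub e (m5 e he)
        · rw [dif_neg h] at he
          have := q4 _ he
          rw [Finset.coe_sdiff, Set.mem_diff] at this
          exact this.1

end Flow2
section Flow3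
variable {V : Type*} [DecidableEq V] {Adj : V → V → Prop} {b : V}

/-- residual adjacency -/
def ResAdj (Adj : V → V → Prop) (f : Finset (V × V)) : V → V → Prop :=
  fun x y => (Adj x y ∧ (x, y) ∉ f) ∨ (y, x) ∈ f

lemma isFlow_augment {f : Finset (V × V)} {T : Finset V} (hf : IsFlow Adj b f T)
    {w : V} (hw : w ∉ T) (hwb : w ≠ b) {L : List V} (hL : L ≠ []) (hnd : L.Nodup)
    (hch : L.Chain' (ResAdj Adj f)) (hh : L.head hL = w) (hl : L.getLast hL = b) :
    ∃ f', IsFlow Adj b f' (insert w T) := by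
  have hstp : ∀ e ∈ steps L, ResAdj Adj f e.1 e.2 := chain'_of_steps hch
  have hndstp : (steps L).Nodup := steps_nodup hnd
  set q : V × V → Bool := fun e => decide ((e.2, e.1) ∈ f) with hq
  set remL : List (V × V) := ((steps L).filter q).map Prod.swap with hremL
  set addL : List (V × V) := (steps L).filter (fun e => !q e) with haddL
  have haddmem : ∀ a ∈ addL, Adj a.1 a.2 ∧ a ∉ f := by
    intro a ha
    rw [haddL, List.mem_filter] at ha
    have hqa : ¬((a.2, a.1) ∈ f) := by
      have := ha.2
      simp only [hq, Bool.not_eq_true', decide_eq_false_iff_not] at this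
      exact this
    rcases hstp a ha.1 with h | h
    · exact ⟨h.1, h.2⟩
    · exact absurd h hqa
  have hremmem : ∀ r ∈ remL, r ∈ f := by
    intro r hr
    rw [hremL, List.mem_map] at hr
    obtain ⟨a, ha, rfl⟩ := hr
    rw [List.mem_filter] at ha
    have := ha.2
    simp only [hq, decide_eq_true_eq] at this
    exact this
  have hndrem : remL.Nodup := ((hndstp.filter _).map Prod.swap_injective)
  have hndadd : addL.Nodup := hndstp.filter _
  set R : Finset (V × V) := remL.toFinset with hR
  set A : Finset (V × V) := addL.toFinset with hA
  have hRf : R ⊆ f := fun r hr => hremmem r (List.mem_toFinset.1 hr)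
  have hAf : Disjoint f A := by
    rw [Finset.disjoint_right]
    intro a ha
    exact (haddmem a (List.mem_toFinset.1 ha)).2
  refine ⟨(f \ R) ∪ A, ?_, ?_⟩
  · intro e he
    rcases Finset.mem_union.1 he with he | he
    · exact hf.1 e (Finset.mem_sdiff.1 he).1
    · exact (haddmem e (List.mem_toFinset.1 he)).1
  · intro x hx
    have hdisj' : Disjoint (f \ R) A := hAf.mono_left Finset.sdiff_subset
    have h1 := card_filter_union_disj (f \ R) A hdisj' (fun e => e.1 = x)
    have h2 := card_filter_union_disj (f \ R) A hdisj' (fun e => e.2 = x)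
    have h3 := card_filter_sdiff f R hRf (fun e => e.1 = x)
    have h4 := card_filter_sdiff f R hRf (fun e => e.2 = x)
    have hA1 : (A.filter (fun e => e.1 = x)).card
        = addL.countP (fun e => decide (e.1 = x)) := toFinset_filter_card hndadd _
    have hA2 : (A.filter (fun e => e.2 = x)).card
        = addL.countP (fun e => decide (e.2 = x)) := toFinset_filter_card hndadd _
    have hR1 : (R.filter (fun e => e.1 = x)).card
        = remL.countP (fun e => decide (e.1 = x)) := toFinset_filter_card hndrem _
    have hR2 : (R.filter (fun e => e.2 = x)).card
        = remL.countP (fun e => decide (e.2 = x)) := toFinset_filter_card hndrem _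
    have hswap1 : remL.countP (fun e => decide (e.1 = x))
        = ((steps L).filter q).countP (fun e => decide (e.2 = x)) := by
      rw [hremL, List.countP_map]
      rfl
    have hswap2 : remL.countP (fun e => decide (e.2 = x))
        = ((steps L).filter q).countP (fun e => decide (e.1 = x)) := by
      rw [hremL, List.countP_map]
      rfl
    have hperm := List.filter_append_perm q (steps L)
    have hcnt1 : ((steps L).filter q).countP (fun e => decide (e.1 = x))
        + addL.countP (fun e => decide (e.1 = x))
        = (steps L).countP (fun e => decide (e.1 = x)) := by
      rw [← List.countP_append]
      exact hperm.countP_eq _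
    have hcnt2 : ((steps L).filter q).countP (fun e => decide (e.2 = x))
        + addL.countP (fun e => decide (e.2 = x))
        = (steps L).countP (fun e => decide (e.2 = x)) := by
      rw [← List.countP_append]
      exact hperm.countP_eq _
    have e3 := steps_countP_fst_sub_snd hL (fun v => decide (v = x))
    rw [hh, hl] at e3
    simp only [decide_eq_true_eq] at e3
    have hfd := hf.2 x hx
    unfold fdiv at hfd ⊢
    rw [h1, h2]
    rcases eq_or_ne x w with rfl | hxw
    · rw [if_pos (Finset.mem_insert_self x T)]
      rw [if_neg hw] at hfd
      rw [if_pos rfl, if_neg (fun h : b = x => hwb h.symm)] at e3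
      omega
    · rw [if_neg (fun h : w = x => hxw h.symm), if_neg (fun h : b = x => hx h.symm)] at e3
      by_cases hxT : x ∈ T
      · rw [if_pos hxT] at hfd
        rw [if_pos (Finset.mem_insert_of_mem hxT)]
        omega
      · rw [if_neg hxT] at hfd
        rw [if_neg (fun h => (Finset.mem_insert.1 h).elim (fun h' => hxw h') hxT)]
        omega

end Flow3
section Flow4
variable {V : Type*} [DecidableEq V] {Adj : V → V → Prop} {b : V}

lemma cut_eq {f : Finset (V × V)} {T : Finset V} (hf : IsFlow Adj b f T)
    (Z : Set V) [DecidablePred (· ∈ Z)] (hbZ : b ∉ Z)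
    (hclosed : ∀ u y, (u, y) ∈ f → y ∈ Z → u ∈ Z) :
    ((f.filter (fun e => e.1 ∈ Z ∧ e.2 ∉ Z)).card : ℤ) = ((T.filter (· ∈ Z)).card : ℤ) := by
  set base : Finset V := (f.image Prod.fst ∪ f.image Prod.snd) ∪ T with hbase
  set A : Finset V := base.filter (· ∈ Z) with hA
  have hsum1 : (f.filter (fun e => e.1 ∈ Z)).card
      = ∑ x ∈ A, (f.filter (fun e => e.1 = x)).card := by
    rw [Finset.card_eq_sum_card_fiberwise (f := Prod.fst) (t := A) ?_]
    · apply Finset.sum_congr rfl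
      intro x hx
      have hxZ : x ∈ Z := (Finset.mem_filter.1 hx).2
      rw [Finset.filter_filter]
      apply congrArg Finset.card
      apply Finset.filter_congr
      intro e _
      constructor
      · rintro ⟨_, h2⟩; exact h2
      · rintro h2; exact ⟨h2 ▸ hxZ, h2⟩
    · intro e he
      rw [Finset.mem_coe, Finset.mem_filter] at he
      refine Finset.mem_coe.2 (Finset.mem_filter.2 ⟨?_, he.2⟩)
      exact Finset.mem_union_left _ (Finset.mem_union_left _ (Finset.mem_image_of_mem _ he.1))
  have hsum2 : (f.filter (fun e => e.2 ∈ Z)).card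
      = ∑ x ∈ A, (f.filter (fun e => e.2 = x)).card := by
    rw [Finset.card_eq_sum_card_fiberwise (f := Prod.snd) (t := A) ?_]
    · apply Finset.sum_congr rfl
      intro x hx
      have hxZ : x ∈ Z := (Finset.mem_filter.1 hx).2
      rw [Finset.filter_filter]
      apply congrArg Finset.card
      apply Finset.filter_congr
      intro e _
      constructor
      · rintro ⟨_, h2⟩; exact h2
      · rintro h2; exact ⟨h2 ▸ hxZ, h2⟩
    · intro e he
      rw [Finset.mem_coe, Finset.mem_filter] at he
      refine Finset.mem_coe.2 (Finset.mem_filter.2 ⟨?_, he.2⟩)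
      exact Finset.mem_union_left _ (Finset.mem_union_right _ (Finset.mem_image_of_mem _ he.1))
  have hdivsum : ∑ x ∈ A, fdiv f x = ((T.filter (· ∈ Z)).card : ℤ) := by
    have h1 : ∑ x ∈ A, fdiv f x = ∑ x ∈ A, (if x ∈ T then (1 : ℤ) else 0) := by
      apply Finset.sum_congr rfl
      intro x hx
      exact hf.2 x (fun h => hbZ (h ▸ (Finset.mem_filter.1 hx).2))
    rw [h1, Finset.sum_boole]
    congr 1
    apply congrArg
    ext x
    simp only [Finset.mem_filter, hA, hbase, Finset.mem_union]
    constructor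
    · rintro ⟨⟨_, hZ⟩, hT⟩; exact ⟨hT, hZ⟩
    · rintro ⟨hT, hZ⟩; exact ⟨⟨Or.inr hT, hZ⟩, hT⟩
  have hdiv2 : ∑ x ∈ A, fdiv f x
      = ((f.filter (fun e => e.1 ∈ Z)).card : ℤ) - ((f.filter (fun e => e.2 ∈ Z)).card : ℤ) := by
    unfold fdiv
    rw [Finset.sum_sub_distrib, hsum1, hsum2]
    push_cast
    ring
  have hs1 : (f.filter (fun e => e.1 ∈ Z ∧ e.2 ∈ Z)).card
      + (f.filter (fun e => e.1 ∈ Z ∧ ¬(e.2 ∈ Z))).card = (f.filter (fun e => e.1 ∈ Z)).card := by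
    rw [← Finset.filter_filter, ← Finset.filter_filter]
    exact Finset.card_filter_add_card_filter_not _
  have hs2 : (f.filter (fun e => e.2 ∈ Z ∧ e.1 ∈ Z)).card
      + (f.filter (fun e => e.2 ∈ Z ∧ ¬(e.1 ∈ Z))).card = (f.filter (fun e => e.2 ∈ Z)).card := by
    rw [← Finset.filter_filter, ← Finset.filter_filter]
    exact Finset.card_filter_add_card_filter_not _
  have hempty : f.filter (fun e => e.2 ∈ Z ∧ ¬(e.1 ∈ Z)) = ∅ := by
    rw [Finset.filter_eq_empty_iff]
    rintro e he ⟨h2, h1⟩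
    exact h1 (hclosed e.1 e.2 (by rwa [Prod.mk.eta]) h2)
  have hcomm : f.filter (fun e => e.1 ∈ Z ∧ e.2 ∈ Z) = f.filter (fun e => e.2 ∈ Z ∧ e.1 ∈ Z) := by
    apply Finset.filter_congr
    intro e _
    exact and_comm
  rw [hempty] at hs2
  rw [hcomm] at hs1
  have := hdivsum.symm.trans hdiv2
  simp only [Finset.card_empty] at hs2
  omega

end Flow4
section Flow5
variable {V : Type*} {Adj : V → V → Prop} {b : V}

lemma steps_concat (y : V) : ∀ (A : List V) (hA : A ≠ []),
    steps (A ++ [y]) = steps A ++ [(A.getLast hA, y)] := by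
  intro A
  induction A with
  | nil => simp
  | cons a A' ih =>
    intro hA2
    cases A' with
    | nil => rfl
    | cons c m =>
      have h1 : (a :: c :: m) ++ [y] = a :: ((c :: m) ++ [y]) := rfl
      rw [h1]
      have h2 : steps (a :: ((c :: m) ++ [y])) = (a, c) :: steps ((c :: m) ++ [y]) := rfl
      rw [h2, ih (by simp)]
      have h3 : (a :: c :: m).getLast hA2 = (c :: m).getLast (by simp) := List.getLast_cons _
      rw [steps_cons2, List.cons_append, h3]

/-- prefix of a ray as a walk -/
lemma ray_prefix (R : DiRay Adj) (k : ℕ) :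
    ∃ (A : List V) (hA : A ≠ []), A.Chain' Adj ∧ A.head hA = R.f 0 ∧
      A.getLast hA = R.f k ∧ ∀ e ∈ steps A, e ∈ R.edgeSet := by
  induction k with
  | zero => exact ⟨[R.f 0], by simp, List.isChain_singleton _, rfl, rfl, by simp [steps]⟩
  | succ k ih =>
    obtain ⟨A, hA, hch, hh, hl, hst⟩ := ih
    refine ⟨A ++ [R.f (k + 1)], by simp, ?_, by rwa [List.head_append_of_ne_nil],
      by rw [getLast_append_ne A (by simp)]; simp, ?_⟩
    · simp only [List.Chain', List.isChain_append]
      refine ⟨hch, by simp, ?_⟩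
      intro x hx y hy
      rw [List.getLast?_eq_getLast hA] at hx
      simp only [Option.mem_def, Option.some.injEq, List.head?_cons] at hx hy
      rw [← hx, ← hy, hl]
      exact R.adj k
    · intro e he
      rw [steps_concat _ A hA, List.mem_append] at he
      rcases he with he | he
      · exact hst e he
      · rw [List.mem_singleton] at he
        rw [he, hl]
        exact ⟨k, rfl⟩

/-- choose a path from an infinite edge-disjoint family avoiding a finite edge set -/
lemma exists_avoid {P : ℕ → DiPath Adj}
    (hdisj : ∀ m n, m ≠ n → Disjoint (P m).edgeSet (P n).edgeSet) (F : Finset (V × V)) :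
    ∃ n, ∀ e ∈ (P n).edgeSet, e ∉ F := by
  by_contra hc
  push_neg at hc
  choose g hg1 hg2 using hc
  have hginj : Function.Injective (fun n => (⟨g n, hg2 n⟩ : {e // e ∈ F})) := by
    intro m n hmn
    by_contra hne
    simp only [Subtype.mk.injEq] at hmn
    exact Set.disjoint_left.1 (hdisj m n hne) (hg1 m) (hmn ▸ hg1 n)
  haveI : Finite {e // e ∈ F} := (FinsetCoe.fintype F).finite
  haveI := Finite.of_injective _ hginj
  exact not_finite ℕ

lemma good_walk {Q : PR Adj} (hgood : Q.Good b) (F : Finset (V × V)) :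
    ∃ (C : List V) (hC : C ≠ []), C.Chain' Adj ∧ C.head hC = Q.first ∧
      C.getLast hC = b ∧ ∀ e ∈ steps C, e ∈ Q.edgeSet ∨ e ∉ F := by
  match Q, hgood with
  | .path P, hgood =>
    rcases hgood with hlast | hdom
    · refine ⟨P.verts, P.ne, P.chain, rfl, hlast, ?_⟩
      intro e he
      exact Or.inl he
    · obtain ⟨Pn, _, hfirst, hlastn, hdisj⟩ := hdom
      obtain ⟨n, hn⟩ := exists_avoid hdisj F
      obtain ⟨C, hC, cch, chd, cls, cst⟩ := walk_append P.ne (Pn n).ne P.chain (Pn n).chain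
        ((hfirst n).symm)
      refine ⟨C, hC, cch, chd, by rw [cls]; exact hlastn n, ?_⟩
      intro e he
      rcases cst e he with h | h
      · exact Or.inl h
      · exact Or.inr (hn e h)
  | .ray R, hdom =>
    obtain ⟨Pn, _, hfirst, hlastn, hdisj⟩ := hdom
    obtain ⟨n, hn⟩ := exists_avoid hdisj F
    obtain ⟨k, hk⟩ := hfirst n
    obtain ⟨A, hA, ach, ahd, als, ast⟩ := ray_prefix R k
    obtain ⟨C, hC, cch, chd, cls, cst⟩ := walk_append hA (Pn n).ne ach (Pn n).chain
      (by rw [als, hk]; rfl)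
    refine ⟨C, hC, cch, by rw [chd, ahd]; rfl, by rw [cls]; exact hlastn n, ?_⟩
    intro e he
    rcases cst e he with h | h
    · exact Or.inl (ast e h)
    · exact Or.inr (hn e h)

end Flow5
theorem stmt0 {V : Type*} (Adj : V → V → Prop) (b : V) (I : Set V) (hb : b ∉ I)
    (h : DomLinkage Adj b I) :
    ∀ S : Finset V, ↑S ⊆ I → FinLinked Adj b S := by
  intro S hS
  classical
  obtain ⟨Q, hQfirst, hQgood, hQdisj⟩ := h
  have hbS : b ∉ S := fun hbs => hb (hS hbs)
  have hflow0 : IsFlow Adj b (∅ : Finset (V × V)) (∅ : Finset V) := by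
    constructor
    · intro e he; simp at he
    · intro x hx; simp [fdiv]
  set cand := S.powerset.filter (fun T => ∃ f, IsFlow Adj b f T) with hcand
  have hne : cand.Nonempty :=
    ⟨∅, Finset.mem_filter.2 ⟨Finset.empty_mem_powerset S, ⟨∅, hflow0⟩⟩⟩
  obtain ⟨T, hTmem, hTmax⟩ := Finset.exists_max_image cand Finset.card hne
  rw [hcand, Finset.mem_filter, Finset.mem_powerset] at hTmem
  obtain ⟨hTS, f, hf⟩ := hTmem
  by_cases hTeq : T = S
  · subst hTeq
    obtain ⟨P, p1, p2, p3, _⟩ := flow_decomp T.card T le_rfl hbS f hf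
    exact ⟨P, p1, p2, p3⟩
  · exfalso
    obtain ⟨v, hvS, hvT⟩ : ∃ v ∈ S, v ∉ T := by
      by_contra hcon
      push_neg at hcon
      exact hTeq (Finset.Subset.antisymm hTS hcon)
    set Z : Set V := {x | ∃ w, w ∈ S ∧ w ∉ T ∧ Relation.ReflTransGen (ResAdj Adj f) w x}
      with hZdef
    by_cases hbZ : b ∈ Z
    · obtain ⟨w, hwS, hwT, hreach⟩ := hbZ
      have hwb : w ≠ b := fun hh => hbS (hh ▸ hwS)
      obtain ⟨L0, hL0, hch0, hh0, hl0⟩ := reflTransGen_walk hreach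
      obtain ⟨M, hM, mc, mnd, mh, ml, -, -⟩ := walk_to_path L0.length L0 le_rfl hL0 hch0
      obtain ⟨f', hf'⟩ := isFlow_augment hf hwT hwb hM mnd mc (mh.trans hh0) (ml.trans hl0)
      have hmem : insert w T ∈ cand := Finset.mem_filter.2
        ⟨Finset.mem_powerset.2 (Finset.insert_subset hwS hTS), f', hf'⟩
      have hle := hTmax _ hmem
      rw [Finset.card_insert_of_notMem hwT] at hle
      omega
    · have hZclosed : ∀ u y, ResAdj Adj f u y → u ∈ Z → y ∈ Z := by
        rintro u y hr ⟨w, h1, h2, h3⟩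
        exact ⟨w, h1, h2, h3.tail hr⟩
      have hfclosed : ∀ u y, (u, y) ∈ f → y ∈ Z → u ∈ Z :=
        fun u y hmem hy => hZclosed y u (Or.inr hmem) hy
      set F := f.filter (fun e => e.1 ∈ Z ∧ e.2 ∉ Z) with hFdef
      have hcut : (F.card : ℤ) = ((T.filter (· ∈ Z)).card : ℤ) := cut_eq hf Z hbZ hfclosed
      have hbdry : ∀ (e : V × V), Adj e.1 e.2 → e.1 ∈ Z → e.2 ∉ Z → e ∈ F := by
        intro e ha hu hy
        have huf : e ∈ f := by
          by_contra hne2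
          exact hy (hZclosed e.1 e.2 (Or.inl ⟨ha, by rwa [Prod.mk.eta]⟩) hu)
        exact Finset.mem_filter.2 ⟨huf, hu, hy⟩
      have hedge : ∀ w (hw : w ∈ S), w ∈ Z →
          ∃ e, e ∈ F ∧ e ∈ (Q ⟨w, hS (Finset.mem_coe.2 hw)⟩).edgeSet := by
        intro w hw hwZ
        obtain ⟨C, hC, cch, chd, cls, cst⟩ := good_walk (hQgood ⟨w, hS (Finset.mem_coe.2 hw)⟩) F
        have hhd : C.head hC ∈ Z := by rw [chd, hQfirst]; exact hwZ
        obtain ⟨e, hest, he1, he2⟩ := exists_crossing Z C hC hhd (by rw [cls]; exact hbZ)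
        have heF : e ∈ F := hbdry e (chain'_of_steps cch e hest) he1 he2
        rcases cst e hest with hq | hnF
        · exact ⟨e, heF, hq⟩
        · exact absurd heF hnF
      set Sz := S.filter (· ∈ Z) with hSzdef
      have hvZ : v ∈ Z := ⟨v, hvS, hvT, Relation.ReflTransGen.refl⟩
      have hvSz : v ∈ Sz := Finset.mem_filter.2 ⟨hvS, hvZ⟩
      have hTsub : T.filter (· ∈ Z) ⊆ Sz.erase v := by
        intro x hx
        rw [Finset.mem_filter] at hx
        exact Finset.mem_erase.2
          ⟨fun hxv => hvT (hxv ▸ hx.1), Finset.mem_filter.2 ⟨hTS hx.1, hx.2⟩⟩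
      have hlt : F.card < Sz.card := by
        have h1 := Finset.card_le_card hTsub
        have h2 := Finset.card_erase_of_mem hvSz
        have h3 : 0 < Sz.card := Finset.card_pos.2 ⟨v, hvSz⟩
        omega
      set g : V → V × V := fun w =>
        if hw : w ∈ S ∧ w ∈ Z then Classical.choose (hedge w hw.1 hw.2) else (b, b) with hgdef
      have hgF : ∀ w ∈ Sz, g w ∈ F := by
        intro w hw
        rw [hSzdef, Finset.mem_filter] at hw
        rw [hgdef]
        simp only [dif_pos (⟨hw.1, hw.2⟩ : w ∈ S ∧ w ∈ Z)]
        exact (Classical.choose_spec (hedge w hw.1 hw.2)).1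
      obtain ⟨w1, hw1, w2, hw2, hne12, heq⟩ :=
        Finset.exists_ne_map_eq_of_card_lt_of_maps_to hlt hgF
      rw [hSzdef, Finset.mem_filter] at hw1 hw2
      have hs1 : g w1 ∈ (Q ⟨w1, hS (Finset.mem_coe.2 hw1.1)⟩).edgeSet := by
        rw [hgdef]
        simp only [dif_pos (⟨hw1.1, hw1.2⟩ : w1 ∈ S ∧ w1 ∈ Z)]
        exact (Classical.choose_spec (hedge w1 hw1.1 hw1.2)).2
      have hs2 : g w2 ∈ (Q ⟨w2, hS (Finset.mem_coe.2 hw2.1)⟩).edgeSet := by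
        rw [hgdef]
        simp only [dif_pos (⟨hw2.1, hw2.2⟩ : w2 ∈ S ∧ w2 ∈ Z)]
        exact (Classical.choose_spec (hedge w2 hw2.1 hw2.2)).2
      have hne' : (⟨w1, hS (Finset.mem_coe.2 hw1.1)⟩ : I) ≠ ⟨w2, hS (Finset.mem_coe.2 hw2.1)⟩ :=
        fun hcc => hne12 (congrArg Subtype.val hcc)
      exact Set.disjoint_left.1 (hQdisj _ _ hne') hs1 (by rwa [heq])
end

section
/- Let G be a digraph with vertex b and vertex set I ⊆ V(G) \ {b} such that every finite subset of I can be linked to b by edge-disjoint directed paths. If D and D' are exact vertex sets (i.e., b ∉ D, the number of D-crossing edges is finite and equals |D ∩ I|, and similarly for D'), then D ∪ D' is exact. -/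
/-- The set of `D`-crossing edges: edges with tail in `D` and head outside `D`. -/
def Cross {V : Type*} (Adj : V → V → Prop) (D : Set V) : Set (V × V) :=
  {e | Adj e.1 e.2 ∧ e.1 ∈ D ∧ e.2 ∉ D}

/-- `D` is exact (for `I` and `b`): `b ∉ D` and the number of `D`-crossing
edges is finite and equals `|D ∩ I|`. -/
def Exact {V : Type*} (Adj : V → V → Prop) (b : V) (I D : Set V) : Prop :=
  b ∉ D ∧ (Cross Adj D).Finite ∧ (D ∩ I).Finite ∧
    (Cross Adj D).ncard = (D ∩ I).ncard


private lemma exists_cross_of_chain {V : Type*} {Adj : V → V → Prop} {D : Set V} :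
    ∀ (l : List V) (h : l ≠ []), l.Chain' Adj → l.head h ∈ D → l.getLast h ∉ D →
      ∃ e ∈ l.zip l.tail, Adj e.1 e.2 ∧ e.1 ∈ D ∧ e.2 ∉ D
  | [], h => absurd rfl h
  | [a], _ => fun _ h1 h2 => absurd h1 h2
  | a :: c :: rest, _ => fun hc h1 h2 => by
    rw [show List.Chain' Adj (a :: c :: rest) ↔ _ from List.isChain_cons_cons] at hc
    by_cases hcD : c ∈ D
    · obtain ⟨e, he, hp⟩ := exists_cross_of_chain (c :: rest) (by simp) hc.2 hcD
        (by rwa [List.getLast_cons (by simp)] at h2)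
      exact ⟨e, List.mem_cons_of_mem _ he, hp⟩
    · exact ⟨(a, c), List.mem_cons_self, hc.1, h1, hcD⟩

private lemma card_le_cross {V : Type*} (Adj : V → V → Prop) (b : V) (I : Set V)
    (hlink : ∀ S : Finset V, ↑S ⊆ I → FinLinked Adj b S)
    (D : Set V) (hbD : b ∉ D) (hfin : (Cross Adj D).Finite)
    (S : Finset V) (hS : ↑S ⊆ D ∩ I) : S.card ≤ (Cross Adj D).ncard := by
  obtain ⟨P, hfirst, hlast, hdisj⟩ := hlink S (fun x hx => (hS hx).2)
  have key : ∀ s : S, ∃ e ∈ (P s).verts.zip (P s).verts.tail,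
      Adj e.1 e.2 ∧ e.1 ∈ D ∧ e.2 ∉ D := by
    intro s
    refine exists_cross_of_chain (P s).verts (P s).ne (P s).chain ?_ ?_
    · have : (P s).verts.head (P s).ne = (s : V) := hfirst s
      rw [this]; exact (hS s.2).1
    · have : (P s).verts.getLast (P s).ne = b := hlast s
      rw [this]; exact hbD
  choose e he hadj hD1 hD2 using key
  have hmemE : ∀ s : S, e s ∈ (P s).edgeSet := fun s => he s
  have hcross : ∀ s : S, e s ∈ Cross Adj D := fun s => ⟨hadj s, hD1 s, hD2 s⟩
  have hinj : Function.Injective e := by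
    intro s t hst
    by_contra hne
    exact Set.disjoint_left.mp (hdisj s t hne) (hmemE s) (hst ▸ hmemE t)
  classical
  calc S.card = S.attach.card := Finset.card_attach.symm
    _ = (S.attach.image e).card :=
        (Finset.card_image_of_injective _ hinj).symm
    _ ≤ hfin.toFinset.card := by
        apply Finset.card_le_card
        intro x hx
        simp only [Finset.mem_image] at hx
        obtain ⟨s, _, rfl⟩ := hx
        exact hfin.mem_toFinset.mpr (hcross s)
    _ = (Cross Adj D).ncard := (Set.ncard_eq_toFinset_card _ hfin).symm

private lemma lower_bound {V : Type*} (Adj : V → V → Prop) (b : V) (I : Set V)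
    (hlink : ∀ S : Finset V, ↑S ⊆ I → FinLinked Adj b S)
    (D : Set V) (hbD : b ∉ D) (hfin : (Cross Adj D).Finite) :
    (D ∩ I).Finite ∧ (D ∩ I).ncard ≤ (Cross Adj D).ncard := by
  have hf : (D ∩ I).Finite := by
    by_contra h
    obtain ⟨S, hS, hcard⟩ := Set.Infinite.exists_subset_card_eq h ((Cross Adj D).ncard + 1)
    have := card_le_cross Adj b I hlink D hbD hfin S hS
    omega
  refine ⟨hf, ?_⟩
  rw [Set.ncard_eq_toFinset_card _ hf]
  exact card_le_cross Adj b I hlink D hbD hfin hf.toFinset (by simp)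

theorem stmt1 {V : Type*} (Adj : V → V → Prop) (b : V) (I : Set V) (hb : b ∉ I)
    (hlink : ∀ S : Finset V, ↑S ⊆ I → FinLinked Adj b S)
    (D D' : Set V) (hD : Exact Adj b I D) (hD' : Exact Adj b I D') :
    Exact Adj b I (D ∪ D') := by

  obtain ⟨hbD, hCD, hID, hcardD⟩ := hD
  obtain ⟨hbD', hCD', hID', hcardD'⟩ := hD'
  -- crossing-set inclusions
  have hsub1 : Cross Adj (D ∪ D') ⊆ Cross Adj D ∪ Cross Adj D' := by
    rintro ⟨u, v⟩ ⟨hadj, hu, hv⟩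
    rcases hu with hu | hu
    · exact Or.inl ⟨hadj, hu, fun h => hv (Or.inl h)⟩
    · exact Or.inr ⟨hadj, hu, fun h => hv (Or.inr h)⟩
  have hsub2 : Cross Adj (D ∩ D') ⊆ Cross Adj D ∪ Cross Adj D' := by
    rintro ⟨u, v⟩ ⟨hadj, hu, hv⟩
    by_cases hvD : v ∈ D
    · exact Or.inr ⟨hadj, hu.2, fun h => hv ⟨hvD, h⟩⟩
    · exact Or.inl ⟨hadj, hu.1, hvD⟩
  have hsub3 : Cross Adj (D ∪ D') ∪ Cross Adj (D ∩ D') ⊆ Cross Adj D ∪ Cross Adj D' :=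
    Set.union_subset hsub1 hsub2
  have hsub4 : Cross Adj (D ∪ D') ∩ Cross Adj (D ∩ D') ⊆ Cross Adj D ∩ Cross Adj D' := by
    rintro ⟨u, v⟩ ⟨⟨hadj, _, hv⟩, ⟨_, hu, _⟩⟩
    exact ⟨⟨hadj, hu.1, fun h => hv (Or.inl h)⟩, ⟨hadj, hu.2, fun h => hv (Or.inr h)⟩⟩
  have hCu : (Cross Adj (D ∪ D')).Finite := (hCD.union hCD').subset hsub1
  have hCi : (Cross Adj (D ∩ D')).Finite := (hCD.union hCD').subset hsub2
  -- submodularity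
  have hsubmod : (Cross Adj (D ∪ D')).ncard + (Cross Adj (D ∩ D')).ncard ≤
      (Cross Adj D).ncard + (Cross Adj D').ncard := by
    rw [← Set.ncard_union_add_ncard_inter _ _ hCu hCi,
      ← Set.ncard_union_add_ncard_inter _ _ hCD hCD']
    exact Nat.add_le_add
      (Set.ncard_le_ncard hsub3 ((hCD.union hCD')))
      (Set.ncard_le_ncard hsub4 (hCD.inter_of_left _))
  -- I-side equality
  have hIeq : ((D ∪ D') ∩ I).ncard + ((D ∩ D') ∩ I).ncard =
      (D ∩ I).ncard + (D' ∩ I).ncard := by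
    have e1 : (D ∪ D') ∩ I = (D ∩ I) ∪ (D' ∩ I) := Set.union_inter_distrib_right ..
    have e2 : (D ∩ D') ∩ I = (D ∩ I) ∩ (D' ∩ I) := by ext x; simp; tauto
    rw [e1, e2, Set.ncard_union_add_ncard_inter _ _ hID hID']
  -- lower bounds
  have hbu : b ∉ D ∪ D' := fun h => h.elim hbD hbD'
  have hbi : b ∉ D ∩ D' := fun h => hbD h.1
  obtain ⟨hIu, hlu⟩ := lower_bound Adj b I hlink (D ∪ D') hbu hCu
  obtain ⟨hIi, hli⟩ := lower_bound Adj b I hlink (D ∩ D') hbi hCi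
  refine ⟨hbu, hCu, hIu, ?_⟩
  omega
end

section
/- Let G be a digraph with vertex b and I ⊆ V(G) \ {b} such that every finite subset of I can be linked to b by edge-disjoint directed paths. If D and D' are exact vertex sets, then there is no edge of G whose tail lies in D \ D' and whose head lies in D' \ D. -/
lemma list_cross {V : Type*} {Adj : V → V → Prop} (X : Set V) :
    ∀ (l : List V) (hl : l ≠ []), l.Chain' Adj → l.head hl ∈ X → l.getLast hl ∉ X →
      ∃ e ∈ l.zip l.tail, Adj e.1 e.2 ∧ e.1 ∈ X ∧ e.2 ∉ X
  | [] => by simp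
  | [a] => by
    intro _ _ h1 h2
    simp only [List.head_cons, List.getLast_singleton] at h1 h2
    exact absurd h1 h2
  | a :: c :: l => by
    intro _ hc h1 h2
    have hc := List.isChain_cons_cons.mp hc
    by_cases hcX : c ∈ X
    · obtain ⟨e, he, hp⟩ := list_cross X (c :: l) (by simp) hc.2 (by simpa using hcX)
        (by rwa [List.getLast_cons (by simp)] at h2)
      exact ⟨e, by simp only [List.zip_cons_cons, List.tail_cons]; exact List.mem_cons_of_mem _ he, hp⟩
    · refine ⟨(a, c), ?_, hc.1, by simpa using h1, hcX⟩
      simp [List.zip_cons_cons]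

lemma path_cross {V : Type*} {Adj : V → V → Prop} (X : Set V) (P : DiPath Adj)
    (h1 : P.first ∈ X) (h2 : P.last ∉ X) : ∃ e ∈ P.edgeSet, e ∈ Cross Adj X := by
  obtain ⟨e, he, hp⟩ := list_cross X P.verts P.ne P.chain h1 h2
  exact ⟨e, he, hp⟩

lemma cross_bound {V : Type*} (Adj : V → V → Prop) (b : V) (I : Set V)
    (hlink : ∀ S : Finset V, ↑S ⊆ I → FinLinked Adj b S)
    (X : Set V) (hbX : b ∉ X) (hfin : (Cross Adj X).Finite) :
    (X ∩ I).Finite ∧ (X ∩ I).ncard ≤ (Cross Adj X).ncard := by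
  haveI := hfin.fintype
  have key : ∀ S : Finset V, ↑S ⊆ X ∩ I → S.card ≤ (Cross Adj X).ncard := by
    intro S hS
    obtain ⟨P, hfirst, hlast, hdisj⟩ := hlink S (fun v hv => (hS hv).2)
    have hcr : ∀ s : S, ∃ e, e ∈ (P s).edgeSet ∧ e ∈ Cross Adj X := by
      intro s
      have h1 : (P s).first ∈ X := by rw [hfirst s]; exact (hS s.2).1
      have h2 : (P s).last ∉ X := by rw [hlast s]; exact hbX
      obtain ⟨e, he, hp⟩ := path_cross X (P s) h1 h2
      exact ⟨e, he, hp⟩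
    choose e he1 he2 using hcr
    have hinj : Function.Injective (fun s : S => (⟨e s, he2 s⟩ : Cross Adj X)) := by
      intro s t hst
      by_contra hne
      have heq : e s = e t := congrArg Subtype.val hst
      exact Set.disjoint_left.mp (hdisj s t hne) (he1 s) (heq ▸ he1 t)
    calc S.card = Fintype.card S := (Fintype.card_coe S).symm
      _ ≤ Fintype.card (Cross Adj X) := Fintype.card_le_of_injective _ hinj
      _ = (Cross Adj X).ncard := by
          rw [Set.ncard_eq_toFinset_card', Set.toFinset_card]
  have hfin2 : (X ∩ I).Finite := by
    by_contra hinf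
    obtain ⟨S, hS, hcard⟩ := Set.Infinite.exists_subset_card_eq hinf ((Cross Adj X).ncard + 1)
    have := key S hS
    omega
  refine ⟨hfin2, ?_⟩
  have := key hfin2.toFinset (by simp)
  rwa [← Set.ncard_eq_toFinset_card _ hfin2] at this

theorem stmt3 {V : Type*} (Adj : V → V → Prop) (b : V) (I : Set V) (hb : b ∉ I)
    (hlink : ∀ S : Finset V, ↑S ⊆ I → FinLinked Adj b S)
    (D D' : Set V) (hD : Exact Adj b I D) (hD' : Exact Adj b I D') :
    ¬ ∃ x y : V, Adj x y ∧ x ∈ D \ D' ∧ y ∈ D' \ D := by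
  rintro ⟨x, y, hxy, ⟨hxD, hxD'⟩, hyD', hyD⟩
  obtain ⟨hbD, hCDfin, hDIfin, hDeq⟩ := hD
  obtain ⟨hbD', hCD'fin, hD'Ifin, hD'eq⟩ := hD'
  set A := Cross Adj (D ∩ D') with hA
  set B := Cross Adj (D ∪ D') with hB
  set C := Cross Adj D with hC
  set E := Cross Adj D' with hE
  have hAsub : A ⊆ C ∪ E := by
    rintro ⟨u, v⟩ ⟨hadj, ⟨huD, huD'⟩, hv⟩
    by_cases hvD : v ∈ D
    · exact Or.inr ⟨hadj, huD', fun hvD' => hv ⟨hvD, hvD'⟩⟩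
    · exact Or.inl ⟨hadj, huD, hvD⟩
  have hBsub : B ⊆ C ∪ E := by
    rintro ⟨u, v⟩ ⟨hadj, hu, hv⟩
    rcases hu with huD | huD'
    · exact Or.inl ⟨hadj, huD, fun h => hv (Or.inl h)⟩
    · exact Or.inr ⟨hadj, huD', fun h => hv (Or.inr h)⟩
  have hABsub : A ∩ B ⊆ C ∩ E := by
    rintro ⟨u, v⟩ ⟨⟨hadj, ⟨huD, huD'⟩, _⟩, ⟨_, _, hv⟩⟩
    exact ⟨⟨hadj, huD, fun h => hv (Or.inl h)⟩, ⟨hadj, huD', fun h => hv (Or.inr h)⟩⟩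
  have hCEfin : (C ∪ E).Finite := hCDfin.union hCD'fin
  have hAfin : A.Finite := hCEfin.subset hAsub
  have hBfin : B.Finite := hCEfin.subset hBsub
  -- the bad edge
  have he0C : (x, y) ∈ C := ⟨hxy, hxD, hyD⟩
  have he0A : (x, y) ∉ A := fun ⟨_, ⟨_, h⟩, _⟩ => hxD' h
  have he0B : (x, y) ∉ B := fun ⟨_, _, h⟩ => h (Or.inr hyD')
  -- lower bounds from linkage
  have hbDD' : b ∉ D ∩ D' := fun h => hbD h.1
  have hbDuD' : b ∉ D ∪ D' := fun h => h.elim hbD hbD'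
  obtain ⟨hIAfin, hIAle⟩ := cross_bound Adj b I hlink (D ∩ D') hbDD' hAfin
  obtain ⟨hIBfin, hIBle⟩ := cross_bound Adj b I hlink (D ∪ D') hbDuD' hBfin
  rw [← hA] at hIAle
  rw [← hB] at hIBle
  -- cardinality arithmetic
  have h1 : (A ∪ B).ncard + (A ∩ B).ncard = A.ncard + B.ncard :=
    Set.ncard_union_add_ncard_inter A B hAfin hBfin
  have h2 : (C ∪ E).ncard + (C ∩ E).ncard = C.ncard + E.ncard :=
    Set.ncard_union_add_ncard_inter C E hCDfin hCD'fin
  have h3 : (A ∪ B).ncard + 1 ≤ (C ∪ E).ncard := by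
    have hins : insert (x, y) (A ∪ B) ⊆ C ∪ E := by
      rintro e (rfl | he)
      · exact Or.inl he0C
      · exact (Set.union_subset hAsub hBsub) he
    have : (insert (x, y) (A ∪ B)).ncard = (A ∪ B).ncard + 1 :=
      Set.ncard_insert_of_notMem (fun h => h.elim he0A he0B) (hAfin.union hBfin)
    have hle := Set.ncard_le_ncard hins hCEfin
    omega
  have h4 : (A ∩ B).ncard ≤ (C ∩ E).ncard :=
    Set.ncard_le_ncard hABsub (hCEfin.subset (Set.inter_subset_left.trans Set.subset_union_left))
  -- intersections with I
  have hI1 : (D ∩ I) ∩ (D' ∩ I) = (D ∩ D') ∩ I := by ext v; simp [Set.mem_inter_iff]; tauto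
  have hI2 : (D ∩ I) ∪ (D' ∩ I) = (D ∪ D') ∩ I := by ext v; simp [Set.mem_inter_iff]; tauto
  have h5 : ((D ∪ D') ∩ I).ncard + ((D ∩ D') ∩ I).ncard = (D ∩ I).ncard + (D' ∩ I).ncard := by
    rw [← hI1, ← hI2]
    exact Set.ncard_union_add_ncard_inter _ _ hDIfin hD'Ifin
  omega
end

section
/- Let G be a digraph with vertex b and I ⊆ V(G) \ {b} such that every finite subset of I admits an edge-disjoint linkage to b. Let D, D' be vertex sets with D' ⊆ D, D' exact, and let L be an edge-disjoint linkage from I ∩ D to b. If some path P ∈ L starts at a vertex in D \ D', then no vertex of P lies in D'. -/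
lemma exists_cross {V : Type*} {Adj : V → V → Prop} {D : Set V} :
    ∀ (l : List V), l.Chain' Adj → ∀ v ∈ l, v ∈ D →
    ∀ (hne : l ≠ []), l.getLast hne ∉ D →
    ∃ e ∈ l.zip l.tail, Adj e.1 e.2 ∧ e.1 ∈ D ∧ e.2 ∉ D := by
  intro l
  induction l with
  | nil => intro _ v hv; simp at hv
  | cons a t ih =>
    intro hc v hv hvD hne hlast
    cases t with
    | nil =>
      simp at hv; subst hv
      simp [List.getLast] at hlast; exact absurd hvD hlast
    | cons c t' =>
      have hlast' : (c :: t').getLast (by simp) ∉ D := by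
        rwa [List.getLast_cons (by simp)] at hlast
      rcases List.mem_cons.mp hv with rfl | hv'
      · by_cases hcD : c ∈ D
        · obtain ⟨e, he, hadj, h1, h2⟩ :=
            ih hc.tail c List.mem_cons_self hcD (by simp) hlast'
          exact ⟨e, by simp only [List.tail_cons, List.zip_cons_cons]; exact List.mem_cons_of_mem _ he,
            hadj, h1, h2⟩
        · exact ⟨(v, c), by simp only [List.tail_cons, List.zip_cons_cons]; exact List.mem_cons_self,
            (List.isChain_cons_cons.mp hc).1, hvD, hcD⟩
      · obtain ⟨e, he, hadj, h1, h2⟩ := ih hc.tail v hv' hvD (by simp) hlast'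
        exact ⟨e, by simp only [List.tail_cons, List.zip_cons_cons]; exact List.mem_cons_of_mem _ he,
          hadj, h1, h2⟩

theorem stmt5 {V : Type*} (Adj : V → V → Prop) (b : V) (I : Set V) (hb : b ∉ I)
    (hlink : ∀ S : Finset V, ↑S ⊆ I → FinLinked Adj b S)
    (D D' : Set V) (hsub : D' ⊆ D) (hD' : Exact Adj b I D')
    (L : ↥(I ∩ D) → DiPath Adj)
    (hfirst : ∀ s, (L s).first = (s : V)) (hlast : ∀ s, (L s).last = b)
    (hdisj : ∀ s t, s ≠ t → Disjoint (L s).edgeSet (L t).edgeSet)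
    (s : ↥(I ∩ D)) (hs : (s : V) ∉ D') :
    ∀ v ∈ (L s).verts, v ∉ D' := by
  intro v hv hvD'
  obtain ⟨hbD', hCrossFin, hDIFin, hcard⟩ := hD'
  set A : Set ↥(I ∩ D) := {t | (t : V) ∈ D'} with hA
  have hsA : s ∉ A := hs
  have key : ∀ t : ↥(I ∩ D), t ∈ insert s A →
      ∃ e, e ∈ Cross Adj D' ∧ e ∈ (L t).edges := by
    intro t ht
    have hvt : ∃ w ∈ (L t).verts, w ∈ D' := by
      rcases Set.mem_insert_iff.mp ht with rfl | htA
      · exact ⟨v, hv, hvD'⟩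
      · refine ⟨(L t).first, List.head_mem _, ?_⟩
        rw [hfirst t]; exact htA
    obtain ⟨w, hw, hwD⟩ := hvt
    have hlastD : (L t).verts.getLast (L t).ne ∉ D' := by
      have h := hlast t
      unfold DiPath.last at h
      rw [h]; exact hbD'
    obtain ⟨e, he, hadj, h1, h2⟩ :=
      exists_cross (L t).verts (L t).chain w hw hwD (L t).ne hlastD
    exact ⟨e, ⟨hadj, h1, h2⟩, he⟩
  have key' : ∀ t : ↥(I ∩ D), ∃ e, t ∈ insert s A →
      (e ∈ Cross Adj D' ∧ e ∈ (L t).edges) := by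
    intro t
    by_cases ht : t ∈ insert s A
    · obtain ⟨e, h1, h2⟩ := key t ht; exact ⟨e, fun _ => ⟨h1, h2⟩⟩
    · exact ⟨(b, b), fun h => absurd h ht⟩
  choose f hf using key'
  have hmaps : ∀ t ∈ insert s A, f t ∈ Cross Adj D' := fun t ht => (hf t ht).1
  have hinj : Set.InjOn f (insert s A) := by
    intro t1 h1 t2 h2 heq
    by_contra hne
    have e1 : f t2 ∈ (L t1).edgeSet := by rw [← heq]; exact (hf t1 h1).2
    have e2 : f t2 ∈ (L t2).edgeSet := (hf t2 h2).2
    exact Set.disjoint_left.mp (hdisj t1 t2 hne) e1 e2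
  have himg : Subtype.val '' A = D' ∩ I := by
    ext x
    constructor
    · rintro ⟨t, ht, rfl⟩; exact ⟨ht, t.2.1⟩
    · rintro ⟨hxD', hxI⟩; exact ⟨⟨x, hxI, hsub hxD'⟩, hxD', rfl⟩
  have hAfin : A.Finite :=
    Set.Finite.of_finite_image (himg ▸ hDIFin) (Subtype.coe_injective.injOn)
  have hAcard : A.ncard = (D' ∩ I).ncard := by
    rw [← himg, Set.ncard_image_of_injective _ Subtype.coe_injective]
  have hle : (insert s A).ncard ≤ (Cross Adj D').ncard :=
    Set.ncard_le_ncard_of_injOn f hmaps hinj hCrossFin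
  rw [Set.ncard_insert_of_notMem hsA hAfin, hcard, ← hAcard] at hle
  omega
end

section
/- Let G be a digraph with vertex b and I ⊆ V(G) \ {b} such that every finite subset of I admits an edge-disjoint linkage to b. If D is an exact vertex set, then its hull D̂ is also exact; moreover I ∩ D̂ = I ∩ D. -/
/-- The hull of `D`: the set of vertices `v` such that every directed `v`–`b`
path contains a `D`-crossing edge. -/
def hull {V : Type*} (Adj : V → V → Prop) (b : V) (D : Set V) : Set V :=
  {v | ∀ P : DiPath Adj, P.first = v → P.last = b → ∃ e ∈ P.edges, e ∈ Cross Adj D}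


private lemma exit_edge {V : Type*} {Adj : V → V → Prop} {A : Set V} :
    ∀ (a : V) (l : List V), (a :: l).Chain' Adj → a ∈ A →
      (a :: l).getLast (List.cons_ne_nil a l) ∉ A →
      ∃ e ∈ (a :: l).zip l, e ∈ Cross Adj A := by
  intro a l
  induction l generalizing a with
  | nil => intro _ ha hl; simp [List.getLast] at hl; exact absurd ha hl
  | cons c t ih =>
    intro hc ha hl
    by_cases hcA : c ∈ A
    · obtain ⟨e, he, hprop⟩ := ih c hc.tail hcA
        (by rwa [List.getLast_cons (List.cons_ne_nil c t)] at hl)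
      exact ⟨e, List.mem_cons_of_mem _ he, hprop⟩
    · exact ⟨(a, c), by simp, (List.isChain_cons_cons.mp hc).1, ha, hcA⟩

private lemma exit_edge' {V : Type*} {Adj : V → V → Prop} {A : Set V}
    (P : DiPath Adj) (h1 : P.first ∈ A) (h2 : P.last ∉ A) :
    ∃ e ∈ P.edges, e ∈ Cross Adj A := by
  obtain ⟨a, l, h⟩ := List.exists_cons_of_ne_nil P.ne
  have hc : (a :: l).Chain' Adj := h ▸ P.chain
  have h1' : a ∈ A := by
    have := h1; unfold DiPath.first at this
    simp only [h, List.head_cons] at this; exact this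
  have h2' : (a :: l).getLast (List.cons_ne_nil a l) ∉ A := by
    have := h2; unfold DiPath.last at this
    simp only [h] at this; exact this
  obtain ⟨e, he, hce⟩ := exit_edge a l hc h1' h2'
  refine ⟨e, ?_, hce⟩
  unfold DiPath.edges
  simp only [h, List.tail_cons]
  exact he

private lemma suffix_path {V : Type*} {Adj : V → V → Prop} :
    ∀ (l : List V) (hne : l ≠ []), l.Chain' Adj → l.Nodup → ∀ u ∈ l,
      ∃ t : List V, (u :: t).Chain' Adj ∧ (u :: t).Nodup ∧
        (u :: t).getLast (List.cons_ne_nil u t) = l.getLast hne ∧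
        (u :: t).zip t ⊆ l.zip l.tail := by
  intro l
  induction l with
  | nil => simp
  | cons a s ih =>
    intro hne hc hd u hu
    rcases List.mem_cons.mp hu with rfl | hu
    · exact ⟨s, hc, hd, rfl, by simp [DiPath.edges]⟩
    · have hs : s ≠ [] := by rintro rfl; simp at hu
      obtain ⟨t, h1, h2, h3, h4⟩ := ih hs hc.tail hd.of_cons u hu
      refine ⟨t, h1, h2, h3.trans (List.getLast_cons hs).symm, ?_⟩
      intro e he
      have h5 := h4 he
      cases s with
      | nil => simp at h5
      | cons b t' =>
        simp only [List.tail_cons] at h5 ⊢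
        exact List.mem_cons_of_mem _ h5

private lemma card_le_ncard {V : Type*} {Adj : V → V → Prop} {E : Set (V × V)}
    (hE : E.Finite) (S : Finset V) (P : S → DiPath Adj)
    (hdisj : ∀ s t : S, s ≠ t → Disjoint (P s).edgeSet (P t).edgeSet)
    (hcross : ∀ s : S, ∃ e ∈ (P s).edges, e ∈ E) :
    S.card ≤ E.ncard := by
  haveI := hE.fintype
  choose f hf1 hf2 using hcross
  have hinj : Function.Injective fun s : S => (⟨f s, hf2 s⟩ : E) := by
    intro s t h
    by_contra hst
    have hfe : f s = f t := congrArg Subtype.val h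
    have hms : f s ∈ (P s).edgeSet := hf1 s
    have hmt : f s ∈ (P t).edgeSet := by rw [hfe]; exact hf1 t
    exact Set.disjoint_left.mp (hdisj s t hst) hms hmt
  have hle := Fintype.card_le_of_injective _ hinj
  have hEc : E.ncard = Fintype.card E := by
    rw [Set.ncard_eq_toFinset_card', Set.toFinset_card]
  rw [← Fintype.card_coe S, hEc]
  exact hle

private lemma cross_hull_subset {V : Type*} (Adj : V → V → Prop) (b : V) (D : Set V) :
    Cross Adj (hull Adj b D) ⊆ Cross Adj D := by
  rintro ⟨u, v⟩ ⟨hadj, hu, hv⟩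
  rw [hull, Set.mem_setOf_eq] at hv
  push_neg at hv
  obtain ⟨P, hPf, hPl, hPe⟩ := hv
  by_cases hu' : u ∈ P.verts
  · exfalso
    obtain ⟨t, h1, h2, h3, h4⟩ := suffix_path P.verts P.ne P.chain P.nodup u hu'
    let Q : DiPath Adj := ⟨u :: t, List.cons_ne_nil u t, h1, h2⟩
    obtain ⟨e, he, hce⟩ := hu Q rfl (h3.trans hPl)
    exact hPe e (h4 he) hce
  · obtain ⟨a, l, hal⟩ := List.exists_cons_of_ne_nil P.ne
    have hav : a = v := by
      have := hPf; unfold DiPath.first at this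
      simp only [hal, List.head_cons] at this; exact this
    have hchain : (u :: P.verts).Chain' Adj := by
      rw [hal]
      exact List.isChain_cons_cons.mpr ⟨hav ▸ hadj, hal ▸ P.chain⟩
    let Q : DiPath Adj := ⟨u :: P.verts, List.cons_ne_nil _ _,
      hchain, List.nodup_cons.mpr ⟨hu', P.nodup⟩⟩
    have hQl : Q.last = b := by
      show (u :: P.verts).getLast _ = b
      rw [List.getLast_cons P.ne]; exact hPl
    obtain ⟨e, he, hce⟩ := hu Q rfl hQl
    have he' : e ∈ (u :: a :: l).zip (a :: l) := by
      have : e ∈ Q.edges := he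
      unfold DiPath.edges at this
      simp only [Q] at this
      simp only [hal, List.tail_cons] at this
      exact this
    rcases List.mem_cons.mp he' with rfl | he''
    · exact hav ▸ hce
    · exfalso
      apply hPe e _ hce
      unfold DiPath.edges
      simp only [hal, List.tail_cons]
      exact he''

theorem stmt8 {V : Type*} (Adj : V → V → Prop) (b : V) (I : Set V) (hb : b ∉ I)
    (hlink : ∀ S : Finset V, ↑S ⊆ I → FinLinked Adj b S)
    (D : Set V) (hD : Exact Adj b I D) :
    Exact Adj b I (hull Adj b D) ∧ I ∩ hull Adj b D = I ∩ D := by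
  classical
  obtain ⟨hbD, hCfin, hDIfin, hcard⟩ := hD
  have hbDh : b ∉ hull Adj b D := by
    intro h
    obtain ⟨e, he, _⟩ := h ⟨[b], by simp, List.isChain_singleton b, by simp⟩ rfl rfl
    simp [DiPath.edges] at he
  have hsub : D ⊆ hull Adj b D := by
    intro x hx P hPf hPl
    exact exit_edge' P (by rw [hPf]; exact hx) (by rw [hPl]; exact hbD)
  have hIDh : I ∩ hull Adj b D = I ∩ D := by
    apply Set.Subset.antisymm
    · rintro x ⟨hxI, hxH⟩
      refine ⟨hxI, ?_⟩
      by_contra hxD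
      set S : Finset V := insert x hDIfin.toFinset with hS
      have hSI : ↑S ⊆ I := by
        intro y hy
        simp only [hS, Finset.coe_insert, Set.mem_insert_iff, Finset.mem_coe,
          Set.Finite.mem_toFinset] at hy
        rcases hy with rfl | hy
        · exact hxI
        · exact hy.2
      obtain ⟨P, hP1, hP2, hP3⟩ := hlink S hSI
      have hle := card_le_ncard hCfin S P hP3 (fun s => by
        have hsH : (s : V) ∈ hull Adj b D := by
          rcases Finset.mem_insert.mp s.2 with h | h
          · exact h ▸ hxH
          · exact hsub ((hDIfin.mem_toFinset).mp h).1
        exact hsH (P s) (hP1 s) (hP2 s))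
      rw [hcard, Set.ncard_eq_toFinset_card _ hDIfin] at hle
      have hxS : x ∉ hDIfin.toFinset := fun h => hxD ((hDIfin.mem_toFinset).mp h).1
      rw [hS, Finset.card_insert_of_notMem hxS] at hle
      omega
    · rintro x ⟨hxI, hxD⟩; exact ⟨hxI, hsub hxD⟩
  have hCDh := cross_hull_subset Adj b D
  have hfinDh : (Cross Adj (hull Adj b D)).Finite := hCfin.subset hCDh
  have hge : (D ∩ I).ncard ≤ (Cross Adj (hull Adj b D)).ncard := by
    obtain ⟨P, hP1, hP2, hP3⟩ := hlink hDIfin.toFinset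
      (fun y hy => ((hDIfin.mem_toFinset).mp hy).2)
    have hle := card_le_ncard hfinDh _ P hP3 (fun s => by
      refine exit_edge' (P s) ?_ ?_
      · rw [hP1 s]; exact hsub ((hDIfin.mem_toFinset).mp s.2).1
      · rw [hP2 s]; exact hbDh)
    rwa [← Set.ncard_eq_toFinset_card _ hDIfin] at hle
  have hle' : (Cross Adj (hull Adj b D)).ncard ≤ (D ∩ I).ncard := by
    rw [← hcard]; exact Set.ncard_le_ncard hCDh hCfin
  have hhI : hull Adj b D ∩ I = D ∩ I := by
    rw [Set.inter_comm, hIDh, Set.inter_comm]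
  refine ⟨⟨hbDh, hfinDh, ?_, ?_⟩, hIDh⟩
  · rw [hhI]; exact hDIfin
  · rw [hhI]; exact le_antisymm hle' hge
end
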